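/- For any constants ζ > 0 and r ∈ ℕ, there exists a constant C(ζ, r) > 0 such that the following holds. Let ζn < k ≤ (1−ζ)n, let ε > 0, and let l < k/C. Suppose F ⊆ P([n]) is a monotone (upward-closed) family with μ(F^(k)) ≤ ε. Then μ(F^(l)) ≤ O_{ζ,r}(ε^r). -/

import Mathlib

open Finset

lemma aux_step {n l t : ℕ} (ht : t < l) (hln : l ≤ n) :
    (n - t) * (n - t - 1).choose (l - t - 1) = (n - t).choose (l - t) * (l - t) := by
  have h1 : n - t = (n - t - 1) + 1 := by omega
  have h2 : l - t = (l - t - 1) + 1 := by omega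
  rw [h1, h2]
  exact Nat.add_one_mul_choose_eq _ _

lemma aux1 {n l : ℕ} (hln : l ≤ n) : ∀ t, t ≤ l →
    (n - t).choose (l - t) * n ^ t ≤ l ^ t * n.choose l := by
  intro t
  induction t with
  | zero => simp
  | succ t ih =>
    intro htl
    have ht : t < l := by omega
    have IH := ih (le_of_lt ht)
    have hnt : 0 < n - t := by omega
    apply Nat.le_of_mul_le_mul_right _ hnt
    have e1 : n - (t + 1) = n - t - 1 := by omega
    have e2 : l - (t + 1) = l - t - 1 := by omega
    rw [e1, e2]
    have key : (n - t - 1).choose (l - t - 1) * n ^ (t + 1) * (n - t)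
        = (n - t).choose (l - t) * n ^ t * ((l - t) * n) := by
      calc (n - t - 1).choose (l - t - 1) * n ^ (t + 1) * (n - t)
          = (n - t) * (n - t - 1).choose (l - t - 1) * n ^ (t + 1) := by ring
        _ = (n - t).choose (l - t) * (l - t) * n ^ (t + 1) := by rw [aux_step ht hln]
        _ = (n - t).choose (l - t) * n ^ t * ((l - t) * n) := by ring
    rw [key]
    have h2 : (l - t) * n ≤ l * (n - t) := by
      have : l * t ≤ t * n := by
        rw [mul_comm]; exact Nat.mul_le_mul_left t hln
      have e1 : (l - t) * n = l * n - t * n := by rw [Nat.sub_mul]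
      have e2 : l * (n - t) = l * n - l * t := by rw [Nat.mul_sub]
      omega
    calc (n - t).choose (l - t) * n ^ t * ((l - t) * n)
        ≤ l ^ t * n.choose l * (l * (n - t)) := Nat.mul_le_mul IH h2
      _ = l ^ (t + 1) * n.choose l * (n - t) := by ring

lemma aux2 {n k : ℕ} (hkn : k ≤ n) : ∀ t, t ≤ k →
    (k - t) ^ t * n.choose k ≤ (n - t).choose (k - t) * n ^ t := by
  intro t
  induction t with
  | zero => simp
  | succ t ih =>
    intro htk
    have ht : t < k := by omega
    have IH := ih (le_of_lt ht)
    have hnt : 0 < n - t := by omega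
    apply Nat.le_of_mul_le_mul_right _ hnt
    have e1 : n - (t + 1) = n - t - 1 := by omega
    have e2 : k - (t + 1) = k - t - 1 := by omega
    rw [e1, e2]
    have key : (n - t - 1).choose (k - t - 1) * n ^ (t + 1) * (n - t)
        = (n - t).choose (k - t) * n ^ t * ((k - t) * n) := by
      calc (n - t - 1).choose (k - t - 1) * n ^ (t + 1) * (n - t)
          = (n - t) * (n - t - 1).choose (k - t - 1) * n ^ (t + 1) := by ring
        _ = (n - t).choose (k - t) * (k - t) * n ^ (t + 1) := by rw [aux_step ht hkn]
        _ = (n - t).choose (k - t) * n ^ t * ((k - t) * n) := by ring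
    rw [key]
    have h2 : (k - t - 1) * (n - t) ≤ (k - t) * n :=
      Nat.mul_le_mul (by omega) (by omega)
    calc (k - t - 1) ^ (t + 1) * n.choose k * (n - t)
        = (k - t - 1) ^ t * n.choose k * ((k - t - 1) * (n - t)) := by ring
      _ ≤ (k - t) ^ t * n.choose k * ((k - t) * n) :=
          Nat.mul_le_mul (Nat.mul_le_mul (Nat.pow_le_pow_left (by omega) t) le_rfl) h2
      _ ≤ (n - t).choose (k - t) * n ^ t * ((k - t) * n) := Nat.mul_le_mul_right _ IH


open Finset

lemma kk_apply {n k l t : ℕ} (F : Finset (Finset (Fin n)))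
    (hmono : ∀ A ∈ F, ∀ B : Finset (Fin n), A ⊆ B → B ∈ F)
    (ht : t ≤ l) (hlk : l ≤ k) (hkn : k ≤ n)
    (h : (n - t).choose (n - l) ≤ #(F.filter (fun A => A.card = l))) :
    (n - t).choose (n - k) ≤ #(F.filter (fun A => A.card = k)) := by
  set Fl := F.filter (fun A => A.card = l) with hFl
  set 𝒜 := Fl.image compl with h𝒜def
  have hinj : Function.Injective (compl : Finset (Fin n) → Finset (Fin n)) :=
    compl_injective
  have hcard𝒜 : #𝒜 = #Fl := card_image_of_injective _ hinj
  have hsized : (𝒜 : Set (Finset (Fin n))).Sized (n - l) := by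
    intro A hA
    simp only [h𝒜def, coe_image, Set.mem_image, mem_coe, hFl, mem_filter] at hA
    obtain ⟨X, ⟨-, hX⟩, rfl⟩ := hA
    simp [card_compl, hX]
  have hkk := Finset.kruskal_katona_lovasz_form (i := k - l) (r := n - l)
    (k := n - t) (n := n) (𝒜 := 𝒜)
    (by omega) (by omega) (by omega) hsized (by rw [hcard𝒜]; exact h)
  have heq : n - l - (k - l) = n - k := by omega
  rw [heq] at hkk
  have hkk' : (n - t).choose (n - k) ≤ #((Finset.shadow (α := Fin n))^[k - l] 𝒜) := by
    convert hkk using 2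
  refine hkk'.trans ((card_le_card ?_).trans_eq (card_image_of_injective _ hinj))
  intro B hB
  rw [mem_shadow_iterate_iff_exists_sdiff] at hB
  obtain ⟨A, hA, hBA, hsd⟩ := hB
  simp only [h𝒜def, mem_image, hFl, mem_filter] at hA
  obtain ⟨X, ⟨hXF, hXl⟩, rfl⟩ := hA
  have hXB : X ⊆ Bᶜ := by
    intro x hx
    rw [mem_compl]
    intro hxB
    have := hBA hxB
    rw [mem_compl] at this
    exact this hx
  have hcardA : #(Xᶜ) = n - l := by simp [card_compl, hXl]
  have hcardB : #B = n - k := by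
    have h1 := card_sdiff_of_subset hBA
    have h2 := card_le_card hBA
    rw [hcardA] at h1 h2
    rw [hsd] at h1
    omega
  have hBc : #(Bᶜ) = k := by
    simp [card_compl, hcardB]; omega
  have hBF : Bᶜ ∈ F := hmono X hXF _ hXB
  rw [mem_image]
  exact ⟨Bᶜ, mem_filter.2 ⟨hBF, hBc⟩, compl_compl B⟩

open Finset

lemma exists_pow_bracket {b ε : ℝ} (hb : 0 < b) (hb1 : b < 1) (hε : 0 < ε) (hε1 : ε < 1) :
    ∃ s : ℕ, ε ≤ b ^ s ∧ b ^ (s + 1) < ε := by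
  classical
  have hex : ∃ t, b ^ t < ε := exists_pow_lt_of_lt_one hε hb1
  have hTspec : b ^ (Nat.find hex) < ε := Nat.find_spec hex
  have hT0 : Nat.find hex ≠ 0 := by
    intro h; rw [h, pow_zero] at hTspec; linarith
  refine ⟨Nat.find hex - 1, not_lt.1 (Nat.find_min hex (by omega)), ?_⟩
  have h1 : Nat.find hex - 1 + 1 = Nat.find hex := by omega
  rw [h1]; exact hTspec

set_option maxHeartbeats 1000000 in
theorem stmt4 (ζ : ℝ) (hζ : 0 < ζ) (r : ℕ) :
    ∃ C K : ℝ, 0 < C ∧ 0 < K ∧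
      ∀ (n k l : ℕ) (ε : ℝ) (F : Finset (Finset (Fin n))),
        (∀ A ∈ F, ∀ B : Finset (Fin n), A ⊆ B → B ∈ F) →
        ζ * n < k → (k : ℝ) ≤ (1 - ζ) * n → 0 < ε → (l : ℝ) < k / C →
        ((F.filter (fun A => A.card = k)).card : ℝ) / (n.choose k) ≤ ε →
        ((F.filter (fun A => A.card = l)).card : ℝ) / (n.choose l) ≤ K * ε ^ r := by
  set ζ₀ : ℝ := min ζ (1/4) with hζ₀def
  have hζ₀pos : 0 < ζ₀ := lt_min hζ (by norm_num)
  have hζ₀le : ζ₀ ≤ 1/4 := min_le_right _ _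
  set b : ℝ := ζ₀ / 2 with hbdef
  have hb : 0 < b := by positivity
  have hb8 : b ≤ 1/8 := by rw [hbdef]; linarith
  have hb1 : b < 1 := by linarith
  have h8b : (8:ℝ) ≤ 1/b := (le_div_iff₀ hb).2 (by linarith)
  have hbinv1 : (1:ℝ) ≤ 1/b := by linarith
  set C : ℝ := (1/b)^(r+1) with hCdef
  set K : ℝ := (1/b)^r with hKdef
  have hK1 : (1:ℝ) ≤ K := one_le_pow₀ hbinv1
  have hC2 : (2:ℝ) ≤ C := by
    have h1 : (1:ℝ) ≤ (1/b)^r := one_le_pow₀ hbinv1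
    have : C = (1/b)^r * (1/b) := by rw [hCdef, pow_succ]
    nlinarith
  have hCpos : (0:ℝ) < C := by linarith
  have hCK : 1/C = b^(r+1) := by
    rw [hCdef, div_pow, one_pow, one_div_one_div]
  refine ⟨C, K, hCpos, by linarith, ?_⟩
  intro n k l ε F hmono hζk hkn' hε hlC hμk
  have hn : 0 < n := by
    by_contra h
    have hn0 : n = 0 := by omega
    rw [hn0] at hζk hkn'
    have h1 : (0:ℝ) < k := by simpa using hζk
    have h2 : (k:ℝ) ≤ 0 := by simpa using hkn'
    linarith
  have hnR : (0:ℝ) < n := by exact_mod_cast hn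
  have hkleR : (k:ℝ) ≤ n := by
    have h0 : (0:ℝ) ≤ ζ * n := by positivity
    linarith
  have hknn : k ≤ n := by exact_mod_cast hkleR
  have hζ₀k : ζ₀ * n < k :=
    lt_of_le_of_lt (mul_le_mul_of_nonneg_right (min_le_left _ _) hnR.le) hζk
  have hkpos : (0:ℝ) < k := lt_of_le_of_lt (by positivity) hζ₀k
  have hlknR : (l:ℝ) < k/2 := by
    refine lt_of_lt_of_le hlC ?_
    rw [div_le_div_iff₀ hCpos (by norm_num : (0:ℝ) < 2)]
    have h0 := mul_le_mul_of_nonneg_right hC2 hkpos.le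
    linarith
  have hlk : l < k := by
    have : (l:ℝ) < k := by linarith
    exact_mod_cast this
  have hln : l ≤ n := by omega
  have hcklR : (0:ℝ) < n.choose l := by exact_mod_cast Nat.choose_pos hln
  have hckkR : (0:ℝ) < n.choose k := by exact_mod_cast Nat.choose_pos hknn
  by_cases hε1 : 1 ≤ ε
  · have hsubP : (F.filter (fun A => A.card = l)) ⊆ Finset.powersetCard l Finset.univ := by
      intro A hA; rw [Finset.mem_powersetCard_univ]; exact (Finset.mem_filter.1 hA).2
    have hc := Finset.card_le_card hsubP
    rw [Finset.card_powersetCard, Finset.card_univ, Fintype.card_fin] at hc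
    have h1 : ((F.filter (fun A => A.card = l)).card : ℝ) ≤ n.choose l := by exact_mod_cast hc
    have h2 : ((F.filter (fun A => A.card = l)).card : ℝ) / (n.choose l) ≤ 1 := by
      rw [div_le_one hcklR]; exact h1
    have h3 : (1:ℝ) ≤ ε^r := one_le_pow₀ hε1
    have h4 : (1:ℝ)*1 ≤ K * ε^r := mul_le_mul hK1 h3 zero_le_one (by linarith)
    linarith
  push_neg at hε1
  obtain ⟨s, hsε, hTε⟩ := exists_pow_bracket hb hb1 hε hε1
  by_contra hcon
  push_neg at hcon
  set t' := min s l with ht'def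
  have ht'l : t' ≤ l := min_le_right _ _
  have ht's : t' ≤ s := min_le_left _ _
  have ht'k : t' ≤ k := le_trans ht'l hlk.le
  have hLpos : (0:ℝ) < (F.filter (fun A => A.card = l)).card := by
    have hKε : (0:ℝ) < K * ε^r := by positivity
    have h2 := hKε.trans hcon
    rcases div_pos_iff.1 h2 with ⟨h3, _⟩ | ⟨_, h4⟩
    · exact h3
    · linarith
  have hcardL : (K * ε^r) * n.choose l < ((F.filter (fun A => A.card = l)).card : ℝ) :=
    (lt_div_iff₀ hcklR).1 hcon
  have claim1 : (n - t').choose (n - l) ≤ (F.filter (fun A => A.card = l)).card := by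
    rcases le_or_gt l s with hls | hsl
    · have het : t' = l := min_eq_right hls
      rw [het, Nat.choose_self]
      have : 0 < (F.filter (fun A => A.card = l)).card := by exact_mod_cast hLpos
      omega
    · have het : t' = s := min_eq_left hsl.le
      rw [het]
      have hsl' : s ≤ l := hsl.le
      have hsym : (n - s).choose (n - l) = (n - s).choose (l - s) := by
        rw [← Nat.choose_symm (by omega : l - s ≤ n - s)]; congr 1; omega
      rw [hsym]
      have haux := aux1 hln s hsl'
      have hR : ((n - s).choose (l - s) : ℝ) * (n:ℝ)^s ≤ (l:ℝ)^s * n.choose l := by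
        exact_mod_cast haux
      have hln' : (l:ℝ)/n < 1/C := by
        rw [div_lt_div_iff₀ hnR hCpos]
        have h1 : (l:ℝ) * C < k := (lt_div_iff₀ hCpos).1 hlC
        linarith
      have e1 : ((n - s).choose (l - s) : ℝ) ≤ ((l:ℝ)/n)^s * n.choose l := by
        rw [div_pow, div_mul_eq_mul_div, le_div_iff₀ (by positivity : (0:ℝ) < (n:ℝ)^s)]
        linarith
      have e2 : ((l:ℝ)/n)^s ≤ (b^(r+1))^s := by
        apply pow_le_pow_left₀ (by positivity) _ s
        rw [← hCK]; exact hln'.le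
      have e4 : K * (b^(s+1))^r ≤ K * ε^r := by
        apply mul_le_mul_of_nonneg_left (pow_le_pow_left₀ (by positivity) hTε.le r)
        positivity
      have e5 : K * (b^(s+1))^r = (b^s)^r := by
        rw [hKdef, ← mul_pow, pow_succ]
        congr 1
        field_simp
      have e6 : (b^(r+1))^s ≤ (b^s)^r := by
        rw [← pow_mul, ← pow_mul]
        exact pow_le_pow_of_le_one hb.le hb1.le
          ((Nat.le_add_right (s*r) s).trans (le_of_eq (by ring)))
      have e7 : ((n - s).choose (l - s) : ℝ) < ((F.filter (fun A => A.card = l)).card : ℝ) := by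
        have c1 := mul_le_mul_of_nonneg_right e2 hcklR.le
        have e3 : (b^(r+1))^s ≤ K * ε^r := by linarith
        have c2 := mul_le_mul_of_nonneg_right e3 hcklR.le
        linarith
      exact_mod_cast e7.le
  have hKK := kk_apply F hmono ht'l hlk.le hknn claim1
  have hsymk : (n - t').choose (n - k) = (n - t').choose (k - t') := by
    rw [← Nat.choose_symm (by omega : k - t' ≤ n - t')]; congr 1; omega
  have hFk : ((n - t').choose (k - t') : ℝ) ≤ ((F.filter (fun A => A.card = k)).card : ℝ) := by
    rw [← hsymk]; exact_mod_cast hKK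
  have haux2 := aux2 hknn t' ht'k
  have hcast : ((k - t' : ℕ):ℝ) = (k:ℝ) - t' := by
    push_cast [Nat.cast_sub ht'k]; ring
  have hc1 : ((k:ℝ) - t')^t' * (n.choose k : ℝ) ≤ ((n - t').choose (k - t') : ℝ) * (n:ℝ)^t' := by
    rw [← hcast]; exact_mod_cast haux2
  have hR2 : b < ((k:ℝ) - t')/n := by
    rw [lt_div_iff₀ hnR]
    have h1 : (t':ℝ) ≤ l := by exact_mod_cast ht'l
    have h2 : b * n = (ζ₀ * n)/2 := by rw [hbdef]; ring
    linarith
  have hμk2 : (((k:ℝ) - t')/n)^t' ≤ ε := by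
    have h1 : (((k:ℝ) - t')/n)^t' * (n.choose k : ℝ) ≤ ((n - t').choose (k - t') : ℝ) := by
      rw [div_pow, div_mul_eq_mul_div, div_le_iff₀ (by positivity : (0:ℝ) < (n:ℝ)^t')]
      linarith
    have h2 : ((n - t').choose (k - t') : ℝ) ≤ ε * n.choose k := by
      refine hFk.trans ?_
      rw [div_le_iff₀ hckkR] at hμk
      exact hμk
    have h3 := h1.trans h2
    exact le_of_mul_le_mul_right h3 hckkR
  have hfinal : ε < (((k:ℝ) - t')/n)^t' := by
    rcases Nat.eq_zero_or_pos t' with h0 | h0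
    · rw [h0, pow_zero]; exact hε1
    · calc ε ≤ b^s := hsε
        _ ≤ b^t' := pow_le_pow_of_le_one hb.le hb1.le ht's
        _ < (((k:ℝ) - t')/n)^t' := pow_lt_pow_left₀ hR2 hb.le (by omega)
  linarith
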